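/- No simple, properly ordered Bratteli-Vershik system that is conjugate to a well timed system is also conjugate to an untimed system. -/

import Mathlib

set_option autoImplicit false

/-- An ordered Bratteli diagram: finite nonempty vertex sets `V n`, a single root
vertex at level `0`, finite edge sets `E n` (edges from level `n` to level `n+1`,
multiple edges allowed), every vertex has an outgoing edge, every non-root vertex
an incoming edge, and the edges into each vertex carry a linear order, encoded by
the relation `elt` which relates only edges with the same target. -/
structure BDiagram where
  V : ℕ → Type
  E : ℕ → Type
  fintV : ∀ n, Fintype (V n)
  fintE : ∀ n, Fintype (E n)
  nonV : ∀ n, Nonempty (V n)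
  rootSubsingleton : Subsingleton (V 0)
  src : ∀ {n}, E n → V n
  tgt : ∀ {n}, E n → V (n + 1)
  hasOut : ∀ (n : ℕ) (v : V n), ∃ e : E n, src e = v
  hasIn : ∀ (n : ℕ) (v : V (n + 1)), ∃ e : E n, tgt e = v
  elt : ∀ {n}, E n → E n → Prop
  elt_tgt : ∀ (n : ℕ) (e f : E n), elt e f → tgt e = tgt f
  elt_irrefl : ∀ (n : ℕ) (e : E n), ¬ elt e e
  elt_trans : ∀ (n : ℕ) (e f g : E n), elt e f → elt f g → elt e g
  elt_total : ∀ (n : ℕ) (e f : E n), tgt e = tgt f → e ≠ f → elt e f ∨ elt f e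

namespace BDiagram

variable (B : BDiagram)

def castV {m n : ℕ} (h : m = n) (v : B.V m) : B.V n := h ▸ v

/-- An edge is minimal if no edge (into the same target) is below it. -/
def IsMinEdge {n : ℕ} (e : B.E n) : Prop := ∀ e' : B.E n, ¬ B.elt e' e

/-- An edge is maximal if no edge (into the same target) is above it. -/
def IsMaxEdge {n : ℕ} (e : B.E n) : Prop := ∀ e' : B.E n, ¬ B.elt e e'

/-- The space of infinite paths from the root. -/
def PathSpace : Type := { x : ∀ n, B.E n // ∀ n, B.tgt (x n) = B.src (x (n + 1)) }

def IsMinPath (x : B.PathSpace) : Prop := ∀ n, B.IsMinEdge (x.1 n)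

def IsMaxPath (x : B.PathSpace) : Prop := ∀ n, B.IsMaxEdge (x.1 n)

/-- Properly ordered: unique minimal and unique maximal path. -/
def ProperlyOrdered : Prop :=
  (∃! x : B.PathSpace, B.IsMinPath x) ∧ (∃! x : B.PathSpace, B.IsMaxPath x)

/-- The partial order on cofinal paths: `x < y` iff they eventually agree and at the
last disagreement the edge of `x` is below the edge of `y`. -/
def pathLT (x y : B.PathSpace) : Prop :=
  ∃ N : ℕ, B.elt (x.1 N) (y.1 N) ∧ ∀ n : ℕ, N < n → x.1 n = y.1 n

/-- `T` is the Vershik map: each non-maximal path goes to its successor, and each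
maximal path goes to a minimal path. -/
def IsVershik (T : B.PathSpace ≃ B.PathSpace) : Prop :=
  (∀ x : B.PathSpace, ¬ B.IsMaxPath x →
    B.pathLT x (T x) ∧ ∀ z : B.PathSpace, B.pathLT x z → ¬ B.pathLT z (T x)) ∧
  (∀ x : B.PathSpace, B.IsMaxPath x → B.IsMinPath (T x))

/-- `f` is a chain of consecutive edges on levels `[a, b)`. -/
def SegOn (f : ∀ i, B.E i) (a b : ℕ) : Prop :=
  ∀ i : ℕ, a ≤ i → i + 1 < b → B.tgt (f i) = B.src (f (i + 1))

/-- Simplicity: some telescoping has complete connections between adjacent levels. -/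
def Simple : Prop :=
  ∃ ns : ℕ → ℕ, StrictMono ns ∧ ns 0 = 0 ∧
    ∀ (l c : ℕ), ns (l + 1) = c + 1 →
      ∀ (v : B.V (ns l)) (w : B.V (c + 1)),
        ∃ f : ∀ i, B.E i, B.SegOn f (ns l) (c + 1) ∧ B.src (f (ns l)) = v ∧ B.tgt (f c) = w

/-- The natural (Cantor) topology on the path space, induced from the product of
the discrete topologies on the edge sets. -/
def pathTop : TopologicalSpace B.PathSpace :=
  TopologicalSpace.induced Subtype.val (@Pi.topologicalSpace ℕ B.E (fun _ => ⊥))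

/-- Integer iterates of a bijection of the path space. -/
def iterZ (T : B.PathSpace ≃ B.PathSpace) (m : ℤ) : B.PathSpace ≃ B.PathSpace :=
  (T : Equiv.Perm B.PathSpace) ^ m

/-- Two paths have the same `k`-coding: for every time `m` the initial segments of
`T^m x` and `T^m y` from the root to level `k` coincide. -/
def SameCoding (T : B.PathSpace ≃ B.PathSpace) (k : ℕ) (x y : B.PathSpace) : Prop :=
  ∀ (m : ℤ) (i : ℕ), i < k → ((B.iterZ T m) x).1 i = ((B.iterZ T m) y).1 i

/-- A depth `k` pair: distinct paths with the same `k`-coding but not the same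
`(k+1)`-coding. -/
def DepthPair (T : B.PathSpace ≃ B.PathSpace) (k : ℕ) (x y : B.PathSpace) : Prop :=
  x ≠ y ∧ B.SameCoding T k x y ∧ ¬ B.SameCoding T (k + 1) x y

/-- The pair `x, y` has a `j` cut: for some time `m`, both `T^m x` and `T^m y` are
minimal from the root into level `j`. -/
def HasCut (T : B.PathSpace ≃ B.PathSpace) (j : ℕ) (x y : B.PathSpace) : Prop :=
  ∃ m : ℤ, (∀ i : ℕ, i < j → B.IsMinEdge (((B.iterZ T m) x).1 i)) ∧
    (∀ i : ℕ, i < j → B.IsMinEdge (((B.iterZ T m) y).1 i))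

/-- Nonexpansive: for every `k ≥ 1` there are two distinct paths with the same
`k`-coding. -/
def Nonexpansive (T : B.PathSpace ≃ B.PathSpace) : Prop :=
  ∀ k : ℕ, 1 ≤ k → ∃ x y : B.PathSpace, x ≠ y ∧ B.SameCoding T k x y

/-- Well timed: for every `k ≥ 1` and every `j > k` there is a depth `k` pair with
a `j` cut. -/
def WellTimed (T : B.PathSpace ≃ B.PathSpace) : Prop :=
  ∀ k : ℕ, 1 ≤ k → ∀ j : ℕ, k < j →
    ∃ x y : B.PathSpace, B.DepthPair T k x y ∧ B.HasCut T j x y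

/-- Very well timed: for every `k ≥ 1` there is a depth `k` pair having a `j` cut
for every `j > k`. -/
def VeryWellTimed (T : B.PathSpace ≃ B.PathSpace) : Prop :=
  ∀ k : ℕ, 1 ≤ k →
    ∃ x y : B.PathSpace, B.DepthPair T k x y ∧ ∀ j : ℕ, k < j → B.HasCut T j x y

/-- Weakly well timed: for infinitely many `k ≥ 1`, for every `j > k` there is a
depth `k` pair with a `j` cut. -/
def WeaklyWellTimed (T : B.PathSpace ≃ B.PathSpace) : Prop :=
  ∀ K : ℕ, ∃ k : ℕ, K ≤ k ∧ 1 ≤ k ∧ ∀ j : ℕ, k < j →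
    ∃ x y : B.PathSpace, B.DepthPair T k x y ∧ B.HasCut T j x y

/-- Untimed: for every `k ≥ 1` there is a `j > k` such that no depth `k` pair has a
`j` cut. -/
def Untimed (T : B.PathSpace ≃ B.PathSpace) : Prop :=
  ∀ k : ℕ, 1 ≤ k → ∃ j : ℕ, k < j ∧
    ∀ x y : B.PathSpace, B.DepthPair T k x y → ¬ B.HasCut T j x y

/-- Very untimed: for every `k ≥ 1`, no depth `k` pair has a `(k+1)` cut. -/
def VeryUntimed (T : B.PathSpace ≃ B.PathSpace) : Prop :=
  ∀ k : ℕ, 1 ≤ k →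
    ∀ x y : B.PathSpace, B.DepthPair T k x y → ¬ B.HasCut T (k + 1) x y

/-- Finite paths from the root to level `n`. -/
def FinPath (n : ℕ) : Type :=
  { f : (i : Fin n) → B.E i.val //
    ∀ (i : ℕ) (h : i + 1 < n), B.tgt (f ⟨i, by omega⟩) = B.src (f ⟨i + 1, h⟩) }

/-- The lexicographic (from the end) order on finite paths to level `n` induced by
the orders on the edges. -/
def finLT {n : ℕ} (p q : B.FinPath n) : Prop :=
  ∃ (N : ℕ) (h : N < n), B.elt (p.1 ⟨N, h⟩) (q.1 ⟨N, h⟩) ∧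
    ∀ (i : ℕ) (hi : i < n), N < i → p.1 ⟨i, hi⟩ = q.1 ⟨i, hi⟩

/-- The finite path `p` to level `n` ends at the vertex `v`. -/
def EndsAt {n : ℕ} (p : B.FinPath n) (v : B.V n) : Prop :=
  ∀ (m : ℕ) (h : n = m + 1), B.tgt (p.1 ⟨m, by omega⟩) = B.castV h v

/-- The initial segment of an infinite path, from the root to level `n`. -/
def pathInit (x : B.PathSpace) (n : ℕ) : B.FinPath n :=
  ⟨fun i => x.1 i.val, fun i _ => x.2 i⟩

/-- The vertex of an infinite path at level `n`. -/
def pathVert (x : B.PathSpace) (n : ℕ) : B.V n := B.src (x.1 n)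

theorem pathInit_endsAt (x : B.PathSpace) (n : ℕ) :
    B.EndsAt (B.pathInit x n) (B.pathVert x n) := by
  intro m h
  subst h
  exact x.2 m

/-- Truncation of a finite path to a lower level. -/
def truncTo {n : ℕ} (k : ℕ) (hk : k ≤ n) (p : B.FinPath n) : B.FinPath k :=
  ⟨fun i => p.1 ⟨i.val, by omega⟩, fun i h => p.2 i (by omega)⟩

/-- Paths `x, x'` are `k`-equivalent at level `n`: there is an order isomorphism
between the sets of finite paths from the root into their level-`n` vertices which
preserves truncations to level `k` (equality of `k`-basic blocks) and which matches
the initial segment of `x` with the initial segment of `x'` (the "dot" is in the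
same place). -/
def KEquivAt (k n : ℕ) (x x' : B.PathSpace) : Prop :=
  ∃ φ : { p : B.FinPath n // B.EndsAt p (B.pathVert x n) } ≃
      { p : B.FinPath n // B.EndsAt p (B.pathVert x' n) },
    (∀ p q, B.finLT p.1 q.1 ↔ B.finLT (φ p).1 (φ q).1) ∧
    (∀ p (i : ℕ) (hik : i < k) (hin : i < n), ((φ p).1).1 ⟨i, hin⟩ = (p.1).1 ⟨i, hin⟩) ∧
    φ ⟨B.pathInit x n, B.pathInit_endsAt x n⟩ = ⟨B.pathInit x' n, B.pathInit_endsAt x' n⟩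

/-- Paths are `k`-equivalent: they agree from the root to level `k` and are
`k`-equivalent at every level `n > k`. -/
def KEquivPaths (k : ℕ) (x x' : B.PathSpace) : Prop :=
  (∀ i : ℕ, i < k → x.1 i = x'.1 i) ∧ ∀ n : ℕ, k < n → B.KEquivAt k n x x'

/-- Standard nonexpansive: for every `k ≥ 1` there is a pair of distinct
`k`-equivalent paths. -/
def SNE : Prop := ∀ k : ℕ, 1 ≤ k → ∃ x x' : B.PathSpace, x ≠ x' ∧ B.KEquivPaths k x x'

/-!  ### Telescoping  -/

theorem castV_eq_of_heq {m n : ℕ} (h : m = n) {v : B.V m} {w : B.V n} (hw : HEq v w) :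
    B.castV h v = w := by
  subst h
  exact eq_of_heq hw

theorem castV_heq {m n : ℕ} (h : m = n) (v : B.V m) : HEq (B.castV h v) v := by
  subst h
  rfl

theorem castV_inj {m n : ℕ} (h : m = n) {v w : B.V m}
    (hvw : B.castV h v = B.castV h w) : v = w := by
  subst h
  exact hvw

def castE {m n : ℕ} (h : m = n) (e : B.E m) : B.E n := h ▸ e

noncomputable def chainFrom (a : ℕ) (v : B.V a) : (i : ℕ) → B.E (a + i)
  | 0 => (B.hasOut a v).choose
  | i + 1 => (B.hasOut (a + i + 1) (B.tgt (chainFrom a v i))).choose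

theorem chainFrom_src_zero (a : ℕ) (v : B.V a) : B.src (B.chainFrom a v 0) = v :=
  (B.hasOut a v).choose_spec

theorem chainFrom_src_succ (a : ℕ) (v : B.V a) (i : ℕ) :
    B.src (B.chainFrom a v (i + 1)) = B.tgt (B.chainFrom a v i) :=
  (B.hasOut (a + i + 1) (B.tgt (B.chainFrom a v i))).choose_spec

noncomputable def chainTo (a : ℕ) : (j : ℕ) → (w : B.V (a + j + 1)) → (i : ℕ) → i ≤ j → B.E (a + i)
  | 0, w, i, _ => B.castE (by omega : a + 0 = a + i) (B.hasIn a w).choose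
  | j + 1, w, i, _ =>
      if h : i ≤ j then chainTo a j (B.src (B.hasIn (a + j + 1) w).choose) i h
      else B.castE (by omega : a + (j + 1) = a + i) (B.hasIn (a + j + 1) w).choose

theorem chainTo_tgt_last (a : ℕ) : ∀ (j : ℕ) (w : B.V (a + j + 1)),
    B.tgt (B.chainTo a j w j le_rfl) = w := by
  intro j w
  cases j with
  | zero =>
      simp only [chainTo]
      exact (B.hasIn a w).choose_spec
  | succ j =>
      simp only [chainTo]
      rw [dif_neg (by omega : ¬ j + 1 ≤ j)]
      exact (B.hasIn (a + j + 1) w).choose_spec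

theorem chainTo_chain (a : ℕ) : ∀ (j : ℕ) (w : B.V (a + j + 1)) (i : ℕ) (h : i + 1 ≤ j)
    (h' : i ≤ j), B.tgt (B.chainTo a j w i h') = B.src (B.chainTo a j w (i + 1) h) := by
  intro j
  induction j with
  | zero => intro w i h h'; omega
  | succ j ih =>
      intro w i h h'
      by_cases hij : i + 1 ≤ j
      · simp only [chainTo]
        rw [dif_pos (by omega : i ≤ j), dif_pos hij]
        exact ih _ i hij (by omega)
      · have hi : i = j := by omega
        subst hi
        simp only [chainTo]
        rw [dif_pos (le_refl i), dif_neg (by omega : ¬ i + 1 ≤ i)]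
        exact B.chainTo_tgt_last a i _


def TelE (a b : ℕ) : Type :=
  { f : (i : Fin (b - a)) → B.E (a + i.val) //
    ∀ (i : ℕ) (h : i + 1 < b - a), B.tgt (f ⟨i, by omega⟩) = B.src (f ⟨i + 1, h⟩) }

def telSrc {a b : ℕ} (hab : a < b) (f : B.TelE a b) : B.V a :=
  B.src (f.1 ⟨0, by omega⟩)

def telTgt {a b : ℕ} (hab : a < b) (f : B.TelE a b) : B.V b :=
  B.castV (by omega : a + (b - a - 1) + 1 = b) (B.tgt (f.1 ⟨b - a - 1, by omega⟩))

def telLT {a b : ℕ} (f g : B.TelE a b) : Prop :=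
  ∃ (N : ℕ) (h : N < b - a), B.elt (f.1 ⟨N, h⟩) (g.1 ⟨N, h⟩) ∧
    ∀ (i : ℕ) (hi : i < b - a), N < i → f.1 ⟨i, hi⟩ = g.1 ⟨i, hi⟩

noncomputable def Telescope (ns : ℕ → ℕ) (hmono : StrictMono ns) (h0 : ns 0 = 0) : BDiagram where
  V l := B.V (ns l)
  E l := B.TelE (ns l) (ns (l + 1))
  fintV l := B.fintV (ns l)
  fintE l := by
    classical
    letI : ∀ i : Fin (ns (l + 1) - ns l), Fintype (B.E (ns l + i.val)) := fun i => B.fintE _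
    exact Subtype.fintype _
  nonV l := B.nonV (ns l)
  rootSubsingleton := by show Subsingleton (B.V (ns 0)); rw [h0]; exact B.rootSubsingleton
  src {l} f := B.telSrc (hmono (Nat.lt_succ_self l)) f
  tgt {l} f := B.telTgt (hmono (Nat.lt_succ_self l)) f
  hasOut := by
    intro l v
    refine ⟨⟨fun i => B.chainFrom (ns l) v i.val,
      fun i h => (B.chainFrom_src_succ (ns l) v i).symm⟩, ?_⟩
    exact B.chainFrom_src_zero (ns l) v
  hasIn := by
    intro l w
    have hab : ns l < ns (l + 1) := hmono (Nat.lt_succ_self l)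
    have hj : ns l + (ns (l + 1) - ns l - 1) + 1 = ns (l + 1) := by omega
    refine ⟨⟨fun i => B.chainTo (ns l) (ns (l + 1) - ns l - 1) (B.castV hj.symm w) i.val
        (by omega), fun i h => B.chainTo_chain _ _ _ i (by omega) (by omega)⟩, ?_⟩
    show B.castV (by omega) (B.tgt (B.chainTo (ns l) (ns (l + 1) - ns l - 1)
      (B.castV hj.symm w) (ns (l + 1) - ns l - 1) (by omega))) = w
    rw [B.chainTo_tgt_last]
    exact B.castV_eq_of_heq _ (B.castV_heq _ w)
  elt {l} f g := B.telLT f g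
  elt_tgt := by
    rintro l f g ⟨N, hN, hlt, hgt⟩
    show B.telTgt _ f = B.telTgt _ g
    unfold telTgt
    refine congrArg (B.castV _) ?_
    rcases eq_or_lt_of_le (show N ≤ ns (l + 1) - ns l - 1 by omega) with h | h
    · subst h
      exact B.elt_tgt _ _ _ hlt
    · exact congrArg B.tgt (hgt _ (by omega) h)
  elt_irrefl := by
    rintro l f ⟨N, h, hlt, -⟩
    exact B.elt_irrefl _ _ hlt
  elt_trans := by
    rintro l f g h ⟨N₁, hN₁, hlt₁, hgt₁⟩ ⟨N₂, hN₂, hlt₂, hgt₂⟩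
    rcases lt_trichotomy N₁ N₂ with hc | hc | hc
    · exact ⟨N₂, hN₂, by rw [hgt₁ N₂ hN₂ hc]; exact hlt₂,
        fun i hi hN => (hgt₁ i hi (by omega)).trans (hgt₂ i hi hN)⟩
    · subst hc
      exact ⟨N₁, hN₁, B.elt_trans _ _ _ _ hlt₁ hlt₂,
        fun i hi hN => (hgt₁ i hi hN).trans (hgt₂ i hi hN)⟩
    · refine ⟨N₁, hN₁, ?_, fun i hi hN => (hgt₁ i hi hN).trans (hgt₂ i hi (by omega))⟩
      rw [← hgt₂ N₁ hN₁ hc]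
      exact hlt₁
  elt_total := by
    intro l f g htgt hne
    classical
    have hab : ns l < ns (l + 1) := hmono (Nat.lt_succ_self l)
    set b := ns (l + 1) - ns l with hb
    have hex : ∃ N, ∃ h : N < b, f.1 ⟨N, h⟩ ≠ g.1 ⟨N, h⟩ := by
      by_contra hco
      push_neg at hco
      exact hne (Subtype.ext (funext fun i => hco i.val i.isLt))
    set P : ℕ → Prop := fun N => ∃ h : N < b, f.1 ⟨N, h⟩ ≠ g.1 ⟨N, h⟩ with hP
    obtain ⟨N₀, hN₀⟩ := hex
    set N := Nat.findGreatest P b with hNdef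
    have hPN : P N := Nat.findGreatest_spec (le_of_lt hN₀.choose) hN₀
    have hafter : ∀ i (hi : i < b), N < i → f.1 ⟨i, hi⟩ = g.1 ⟨i, hi⟩ := by
      intro i hi hNi
      by_contra hcon
      exact Nat.findGreatest_is_greatest hNi (le_of_lt hi) ⟨hi, hcon⟩
    clear_value N
    obtain ⟨hNb, hNne⟩ := hPN
    have htgtN : B.tgt (f.1 ⟨N, hNb⟩) = B.tgt (g.1 ⟨N, hNb⟩) := by
      rcases eq_or_lt_of_le (show N ≤ b - 1 by omega) with h | h
      · -- N is the last index; use equality of targets of the composite edges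
        subst h
        exact B.castV_inj _ htgt
      · have h2 : f.1 ⟨N + 1, by omega⟩ = g.1 ⟨N + 1, by omega⟩ :=
          hafter (N + 1) (by omega) (by omega)
        rw [f.2 N (by omega), g.2 N (by omega), h2]
    rcases B.elt_total _ _ _ htgtN hNne with h | h
    · exact Or.inl ⟨N, hNb, h, hafter⟩
    · exact Or.inr ⟨N, hNb, h, fun i hi hN => (hafter i hi hN).symm⟩

def teleMap (ns : ℕ → ℕ) (hmono : StrictMono ns) (h0 : ns 0 = 0) (x : B.PathSpace) :
    (B.Telescope ns hmono h0).PathSpace :=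
  ⟨fun l => ⟨fun i => x.1 (ns l + i.val), fun i _ => x.2 (ns l + i)⟩, fun l => by
    have hab : ns l < ns (l + 1) := hmono (Nat.lt_succ_self l)
    have hm : ns l + (ns (l + 1) - ns l - 1) + 1 = ns (l + 1) := by omega
    show B.castV _ (B.tgt (x.1 (ns l + (ns (l + 1) - ns l - 1)))) = B.src (x.1 (ns (l + 1) + 0))
    rw [x.2 (ns l + (ns (l + 1) - ns l - 1))]
    exact B.castV_eq_of_heq _ (by rw [hm]; exact HEq.rfl)⟩


/-- Level `n+1` is uniformly ordered: there is a single nonempty block `P` of paths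
from the root to level `n` such that the `n`-basic block at every vertex at level
`n+1` is a positive power of `P`. -/
def UniformlyOrderedLevel (n : ℕ) : Prop :=
  ∃ (p : ℕ) (hp : 0 < p) (P : Fin p → B.FinPath n),
    ∀ v : B.V (n + 1), ∃ (m : ℕ), 0 < m ∧
      ∃ enum : Fin (m * p) ≃ { q : B.FinPath (n + 1) // B.EndsAt q v },
        (∀ i j : Fin (m * p), i < j ↔ B.finLT (enum i).1 (enum j).1) ∧
        (∀ i : Fin (m * p),
          B.truncTo n (Nat.le_succ n) (enum i).1 = P ⟨i.val % p, Nat.mod_lt _ hp⟩)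

/-- The ordinal label of an edge: its position in the linear order on the edges
into its target. -/
noncomputable def edgeLabel {n : ℕ} (e : B.E n) : ℕ := Nat.card { e' : B.E n // B.elt e' e }

/-- Deterministic: for every `n ≥ 1`, distinct edges with the same source at level
`n` have different ordinal labels. -/
def Deterministic : Prop :=
  ∀ n : ℕ, 1 ≤ n → ∀ e f : B.E n, B.src e = B.src f → e ≠ f →
    B.edgeLabel e ≠ B.edgeLabel f

end BDiagram

/-- A Bratteli–Vershik system: a simple, properly ordered ordered Bratteli diagram
together with its Vershik map. -/
structure BVSystem where
  B : BDiagram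
  T : B.PathSpace ≃ B.PathSpace
  proper : B.ProperlyOrdered
  simple : B.Simple
  vershik : B.IsVershik T

/-- Conjugacy of systems: an equivariant homeomorphism of the path spaces taking
minimal paths to minimal paths. -/
def Conjugate (S S' : BVSystem) : Prop :=
  ∃ φ : S.B.PathSpace ≃ S'.B.PathSpace,
    (@Continuous _ _ S.B.pathTop S'.B.pathTop φ) ∧
    (@Continuous _ _ S'.B.pathTop S.B.pathTop φ.symm) ∧
    (∀ x, φ (S.T x) = S'.T (φ x)) ∧
    (∀ x, S.B.IsMinPath x → S'.B.IsMinPath (φ x))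

/-- An odometer: a system whose diagram has exactly one vertex at every level. -/
def IsOdometer (S : BVSystem) : Prop := ∀ n, Subsingleton (S.B.V n)

/-! ### Auxiliary material for Statement 14 -/

namespace BDiagram

noncomputable section Aux

open Filter Topology

instance instETop (B : BDiagram) (n : ℕ) : TopologicalSpace (B.E n) := ⊥
instance instEDisc (B : BDiagram) (n : ℕ) : DiscreteTopology (B.E n) := ⟨rfl⟩
noncomputable instance instEFin (B : BDiagram) (n : ℕ) : Fintype (B.E n) := B.fintE n
instance instPathTop (B : BDiagram) : TopologicalSpace B.PathSpace := B.pathTop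

variable {B : BDiagram}

theorem pathSpace_ext {x y : B.PathSpace} (h : ∀ n, x.1 n = y.1 n) : x = y :=
  Subtype.ext (funext h)

theorem iterZ_zero_apply (T : B.PathSpace ≃ B.PathSpace) (x : B.PathSpace) :
    B.iterZ T 0 x = x := by
  show ((T : Equiv.Perm B.PathSpace) ^ (0 : ℤ)) x = x
  rw [zpow_zero]; rfl

theorem iterZ_add_apply (T : B.PathSpace ≃ B.PathSpace) (m a : ℤ) (x : B.PathSpace) :
    B.iterZ T (m + a) x = B.iterZ T m (B.iterZ T a x) := by
  show ((T : Equiv.Perm B.PathSpace) ^ (m + a)) x = _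
  rw [zpow_add, Equiv.Perm.mul_apply]
  rfl

theorem iterZ_succ_apply (T : B.PathSpace ≃ B.PathSpace) (m : ℤ) (x : B.PathSpace) :
    B.iterZ T (m + 1) x = T (B.iterZ T m x) := by
  show ((T : Equiv.Perm B.PathSpace) ^ (m + 1)) x = _
  rw [show m + 1 = 1 + m by omega, zpow_add, zpow_one, Equiv.Perm.mul_apply]
  rfl

theorem iterZ_pred_apply (T : B.PathSpace ≃ B.PathSpace) (m : ℤ) (x : B.PathSpace) :
    B.iterZ T (m - 1) x = T.symm (B.iterZ T m x) := by
  show ((T : Equiv.Perm B.PathSpace) ^ (m - 1)) x = _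
  rw [show m - 1 = -1 + m by omega, zpow_add, zpow_neg_one, Equiv.Perm.mul_apply,
    Equiv.Perm.inv_def]
  rfl

theorem sameCoding_antitone {T : B.PathSpace ≃ B.PathSpace} {k k' : ℕ} (h : k ≤ k')
    {x y : B.PathSpace} (hs : B.SameCoding T k' x y) : B.SameCoding T k x y :=
  fun m i hi => hs m i (lt_of_lt_of_le hi h)

theorem sameCoding_iterZ_iff (T : B.PathSpace ≃ B.PathSpace) (a : ℤ) (k : ℕ)
    (x y : B.PathSpace) :
    B.SameCoding T k (B.iterZ T a x) (B.iterZ T a y) ↔ B.SameCoding T k x y := by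
  constructor
  · intro h m i hi
    have h2 := h (m - a) i hi
    rwa [← iterZ_add_apply, ← iterZ_add_apply, sub_add_cancel] at h2
  · intro h m i hi
    rw [← iterZ_add_apply, ← iterZ_add_apply]
    exact h (m + a) i hi

theorem exists_not_sameCoding (T : B.PathSpace ≃ B.PathSpace) {x y : B.PathSpace}
    (hne : x ≠ y) : ∃ k, ¬ B.SameCoding T k x y := by
  have hx : ∃ i, x.1 i ≠ y.1 i := by
    by_contra hc; push_neg at hc; exact hne (pathSpace_ext hc)
  obtain ⟨i, hi⟩ := hx
  refine ⟨i + 1, fun h => hi ?_⟩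
  have h2 := h 0 i (Nat.lt_succ_self i)
  rwa [iterZ_zero_apply, iterZ_zero_apply] at h2

theorem iterZ_map {B₁ B₂ : BDiagram} {T₁ : B₁.PathSpace ≃ B₁.PathSpace}
    {T₂ : B₂.PathSpace ≃ B₂.PathSpace} (ψ : B₁.PathSpace ≃ B₂.PathSpace)
    (h : ∀ x, ψ (T₁ x) = T₂ (ψ x)) (m : ℤ) (x : B₁.PathSpace) :
    ψ (B₁.iterZ T₁ m x) = B₂.iterZ T₂ m (ψ x) := by
  have hsymm : ∀ x, ψ (T₁.symm x) = T₂.symm (ψ x) := by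
    intro z
    apply T₂.injective
    rw [Equiv.apply_symm_apply, ← h, Equiv.apply_symm_apply]
  induction m using Int.induction_on with
  | zero => rw [iterZ_zero_apply, iterZ_zero_apply]
  | succ n ih => rw [iterZ_succ_apply, iterZ_succ_apply, h, ih]
  | pred n ih =>
      rw [show (-(n : ℤ) - 1) = (-(n : ℤ)) - 1 from rfl, iterZ_pred_apply, iterZ_pred_apply,
        hsymm, ih]

theorem sameCoding_map {B₁ B₂ : BDiagram} {T₁ : B₁.PathSpace ≃ B₁.PathSpace}
    {T₂ : B₂.PathSpace ≃ B₂.PathSpace} (ψ : B₁.PathSpace ≃ B₂.PathSpace)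
    (hequiv : ∀ x, ψ (T₁ x) = T₂ (ψ x)) {K k : ℕ}
    (hUC : ∀ u v : B₁.PathSpace, (∀ i, i < K → u.1 i = v.1 i) →
      ∀ i, i < k → (ψ u).1 i = (ψ v).1 i)
    {x y : B₁.PathSpace} (h : B₁.SameCoding T₁ K x y) :
    B₂.SameCoding T₂ k (ψ x) (ψ y) := by
  intro m i hik
  have h2 := hUC (B₁.iterZ T₁ m x) (B₁.iterZ T₁ m y) (fun i' hi' => h m i' hi') i hik
  rwa [iterZ_map ψ hequiv, iterZ_map ψ hequiv] at h2

/-! #### Topological facts -/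

theorem isClosed_chainSet (B : BDiagram) :
    IsClosed {f : ∀ n, B.E n | ∀ n, B.tgt (f n) = B.src (f (n + 1))} := by
  have he : {f : ∀ n, B.E n | ∀ n, B.tgt (f n) = B.src (f (n + 1))}
      = ⋂ n : ℕ, (fun f : ∀ n, B.E n => (f n, f (n + 1))) ⁻¹'
          {p : B.E n × B.E (n + 1) | B.tgt p.1 = B.src p.2} := by
    ext f; simp [Set.mem_iInter]
  rw [he]
  exact isClosed_iInter fun n =>
    IsClosed.preimage ((continuous_apply n).prodMk (continuous_apply (n + 1)))
      (isClosed_discrete _)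

theorem isClosed_forall_lt (B : BDiagram) (N : ℕ) (S : (n : ℕ) → Set (B.E n)) :
    IsClosed {f : ∀ n, B.E n | ∀ i, i < N → f i ∈ S i} := by
  have he : {f : ∀ n, B.E n | ∀ i, i < N → f i ∈ S i}
      = ⋂ i : ℕ, ⋂ (_ : i < N), (fun f : ∀ n, B.E n => f i) ⁻¹' (S i) := by
    ext f; simp [Set.mem_iInter]
  rw [he]
  exact isClosed_iInter fun i => isClosed_iInter fun _ =>
    IsClosed.preimage (continuous_apply i) (isClosed_discrete _)

theorem isClosed_exists_ne (B : BDiagram) (J : ℕ) (g : ∀ n, B.E n) :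
    IsClosed {f : ∀ n, B.E n | ∃ i, i < J ∧ f i ≠ g i} := by
  have he : {f : ∀ n, B.E n | ∃ i, i < J ∧ f i ≠ g i}
      = ⋃ i ∈ Finset.range J, (fun f : ∀ n, B.E n => f i) ⁻¹' {e | e ≠ g i} := by
    ext f; simp [Finset.mem_range]
  rw [he]
  exact Set.Finite.isClosed_biUnion (Finset.finite_toSet _) fun i _ =>
    IsClosed.preimage (continuous_apply i) (isClosed_discrete _)

theorem isOpen_agree (B : BDiagram) (N : ℕ) (g : ∀ n, B.E n) :
    IsOpen {f : ∀ n, B.E n | ∀ i, i < N → f i = g i} := by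
  have he : {f : ∀ n, B.E n | ∀ i, i < N → f i = g i}
      = ⋂ i ∈ Finset.range N, (fun f : ∀ n, B.E n => f i) ⁻¹' {g i} := by
    ext f; simp [Finset.mem_range]
  rw [he]
  exact isOpen_biInter_finset fun i _ =>
    (continuous_apply i).isOpen_preimage _ (isOpen_discrete _)

theorem exists_agree_subset_of_isOpen {B : BDiagram} {U : Set B.PathSpace} (hU : IsOpen U)
    {x : B.PathSpace} (hx : x ∈ U) :
    ∃ m : ℕ, ∀ y : B.PathSpace, (∀ i, i < m → y.1 i = x.1 i) → y ∈ U := by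
  obtain ⟨V, hV, rfl⟩ := isOpen_induced_iff.mp hU
  have hmem : V ∈ nhds (x.1 : ∀ n, B.E n) := hV.mem_nhds hx
  rw [nhds_pi, Filter.mem_pi] at hmem
  obtain ⟨I, hIfin, t, ht, hsub⟩ := hmem
  have hxt : ∀ i, x.1 i ∈ t i := by
    intro i
    have h2 := ht i
    rwa [nhds_discrete, Filter.mem_pure] at h2
  obtain ⟨b, hb⟩ := hIfin.bddAbove
  refine ⟨b + 1, fun y hy => ?_⟩
  apply hsub
  intro n hn
  have hnb : n < b + 1 := Nat.lt_succ_of_le (hb hn)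
  rw [hy n hnb]
  exact hxt n

theorem unif_cont {B₁ B₂ : BDiagram} (ψ : B₁.PathSpace → B₂.PathSpace)
    (hψ : Continuous ψ) (k : ℕ) :
    ∃ K : ℕ, ∀ u v : B₁.PathSpace, (∀ i, i < K → u.1 i = v.1 i) →
      ∀ i, i < k → (ψ u).1 i = (ψ v).1 i := by
  classical
  have hval : Continuous (Subtype.val : B₂.PathSpace → ∀ n, B₂.E n) := continuous_induced_dom
  have hco : ∀ i : ℕ, Continuous fun u : B₁.PathSpace => (ψ u).1 i := fun i =>
    (continuous_apply i).comp (hval.comp hψ)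
  have hO : ∀ x : B₁.PathSpace, IsOpen {w : B₁.PathSpace | ∀ i, i < k → (ψ w).1 i = (ψ x).1 i} := by
    intro x
    have he : {w : B₁.PathSpace | ∀ i, i < k → (ψ w).1 i = (ψ x).1 i}
        = ⋂ i ∈ Finset.range k, (fun w : B₁.PathSpace => (ψ w).1 i) ⁻¹' {(ψ x).1 i} := by
      ext w; simp [Finset.mem_range]
    rw [he]
    exact isOpen_biInter_finset fun i _ =>
      (hco i).isOpen_preimage _ (isOpen_discrete _)
  have hcylO : ∀ x : B₁.PathSpace, ∃ m : ℕ, ∀ y : B₁.PathSpace,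
      (∀ i, i < m → y.1 i = x.1 i) → ∀ i, i < k → (ψ y).1 i = (ψ x).1 i :=
    fun x => exists_agree_subset_of_isOpen (hO x) (fun i _ => rfl)
  choose m hm using hcylO
  -- compactness of the chain set
  have hscl : IsClosed {f : ∀ n, B₁.E n | ∀ n, B₁.tgt (f n) = B₁.src (f (n + 1))} :=
    isClosed_chainSet B₁
  have hscpt : IsCompact {f : ∀ n, B₁.E n | ∀ n, B₁.tgt (f n) = B₁.src (f (n + 1))} :=
    hscl.isCompact
  have hcover : {f : ∀ n, B₁.E n | ∀ n, B₁.tgt (f n) = B₁.src (f (n + 1))}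
      ⊆ ⋃ x : B₁.PathSpace, {g : ∀ n, B₁.E n | ∀ i, i < m x → g i = x.1 i} := by
    intro f hf
    exact Set.mem_iUnion.mpr ⟨⟨f, hf⟩, fun i _ => rfl⟩
  obtain ⟨t, ht⟩ := hscpt.elim_finite_subcover
    (fun x : B₁.PathSpace => {g : ∀ n, B₁.E n | ∀ i, i < m x → g i = x.1 i})
    (fun x => isOpen_agree B₁ (m x) x.1) hcover
  refine ⟨t.sup m, fun u v hagree i hik => ?_⟩
  have hu : u.1 ∈ ⋃ x ∈ t, {g : ∀ n, B₁.E n | ∀ i, i < m x → g i = x.1 i} := ht u.2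
  obtain ⟨x, hxt, hxW⟩ := Set.mem_iUnion₂.mp hu
  have hmx : m x ≤ t.sup m := Finset.le_sup hxt
  have hux : ∀ i', i' < k → (ψ u).1 i' = (ψ x).1 i' := hm x u (fun i' hi' => hxW i' hi')
  have hvx : ∀ i', i' < k → (ψ v).1 i' = (ψ x).1 i' := by
    refine hm x v (fun i' hi' => ?_)
    rw [← hagree i' (lt_of_lt_of_le hi' hmx)]
    exact hxW i' hi'
  rw [hux i hik, hvx i hik]

theorem minimal_stabilize (B : BDiagram) (xmin : B.PathSpace)
    (huniq : ∀ z : B.PathSpace, B.IsMinPath z → z = xmin) (J : ℕ) :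
    ∃ N : ℕ, ∀ u : B.PathSpace, (∀ i, i < N → B.IsMinEdge (u.1 i)) →
      ∀ i, i < J → u.1 i = xmin.1 i := by
  by_contra hcon
  push_neg at hcon
  set A : ℕ → Set (∀ n, B.E n) := fun N =>
    {f | (∀ n, B.tgt (f n) = B.src (f (n + 1))) ∧ ((∀ i, i < N → B.IsMinEdge (f i)) ∧
      ∃ i, i < J ∧ f i ≠ xmin.1 i)} with hA
  have hsub : ∀ N, A (N + 1) ⊆ A N := by
    intro N f hf
    exact ⟨hf.1, fun i hi => hf.2.1 i (by omega), hf.2.2⟩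
  have hne : ∀ N, (A N).Nonempty := by
    intro N
    obtain ⟨u, h1, i, hiJ, hne'⟩ := hcon N
    exact ⟨u.1, u.2, h1, i, hiJ, hne'⟩
  have hclosed : ∀ N, IsClosed (A N) := by
    intro N
    exact IsClosed.inter (isClosed_chainSet B)
      (IsClosed.inter (isClosed_forall_lt B N fun n => {e | B.IsMinEdge e})
        (isClosed_exists_ne B J xmin.1))
  obtain ⟨f, hf⟩ := IsCompact.nonempty_iInter_of_sequence_nonempty_isCompact_isClosed A
    hsub hne ((hclosed 0).isCompact) hclosed
  have hfA : ∀ N, f ∈ A N := fun N => Set.mem_iInter.mp hf N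
  have hchain : ∀ n, B.tgt (f n) = B.src (f (n + 1)) := (hfA 0).1
  set z : B.PathSpace := ⟨f, hchain⟩ with hz
  have hmin : B.IsMinPath z := fun n => (hfA (n + 1)).2.1 n (Nat.lt_succ_self n)
  have hzx : z = xmin := huniq z hmin
  obtain ⟨i, hiJ, hnei⟩ := (hfA 0).2.2
  apply hnei
  have : z.1 = xmin.1 := congrArg Subtype.val hzx
  exact congrFun this i

end Aux

end BDiagram

/-- No simple, properly ordered Bratteli–Vershik system that is
conjugate to a well timed system is also conjugate to an untimed system. -/
theorem not_conjugate_wellTimed_and_untimed (S : BVSystem) :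
    ¬ ((∃ S₁ : BVSystem, Conjugate S S₁ ∧ S₁.B.WellTimed S₁.T) ∧
       (∃ S₂ : BVSystem, Conjugate S S₂ ∧ S₂.B.Untimed S₂.T)) := by
  classical
  rintro ⟨⟨S₁, ⟨φ₁, hφ₁c, hφ₁c', hφ₁e, hφ₁m⟩, hWT⟩, ⟨S₂, ⟨φ₂, hφ₂c, hφ₂c', hφ₂e, hφ₂m⟩, hUT⟩⟩
  obtain ⟨m₀, hm₀p, -⟩ := S.proper.1
  obtain ⟨z₁, hz₁, hz₁u⟩ := S₁.proper.1
  set ψ : S₁.B.PathSpace ≃ S₂.B.PathSpace := φ₁.symm.trans φ₂ with hψdef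
  have hψapp : ∀ x, ψ x = φ₂ (φ₁.symm x) := fun x => rfl
  have hψc : Continuous (⇑ψ) := by
    have h1 : Continuous fun x : S₁.B.PathSpace => φ₂ (φ₁.symm x) :=
      Continuous.comp hφ₂c hφ₁c'
    exact h1
  have hψsc : Continuous (⇑ψ.symm) := by
    have h1 : Continuous fun x : S₂.B.PathSpace => φ₁ (φ₂.symm x) :=
      Continuous.comp hφ₁c hφ₂c'
    exact h1
  have hφ₁e' : ∀ x, φ₁.symm (S₁.T x) = S.T (φ₁.symm x) := by
    intro x
    apply φ₁.injective
    rw [Equiv.apply_symm_apply, hφ₁e, Equiv.apply_symm_apply]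
  have hψe : ∀ x, ψ (S₁.T x) = S₂.T (ψ x) := by
    intro x
    rw [hψapp, hψapp, hφ₁e', hφ₂e]
  have hψe' : ∀ x, ψ.symm (S₂.T x) = S₁.T (ψ.symm x) := by
    intro x
    apply ψ.injective
    rw [Equiv.apply_symm_apply, hψe, Equiv.apply_symm_apply]
  set min₁ := φ₁ m₀ with hmin₁def
  have hmin₁p : S₁.B.IsMinPath min₁ := hφ₁m m₀ hm₀p
  have huniq₁ : ∀ z, S₁.B.IsMinPath z → z = min₁ :=
    fun z hz => (hz₁u z hz).trans (hz₁u min₁ hmin₁p).symm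
  set min₂ := φ₂ m₀ with hmin₂def
  have hmin₂p : S₂.B.IsMinPath min₂ := hφ₂m m₀ hm₀p
  have hψmin : ψ min₁ = min₂ := by
    rw [hψapp, hmin₁def, Equiv.symm_apply_apply, hmin₂def]
  obtain ⟨M₁, hM₁⟩ := BDiagram.unif_cont (⇑ψ) hψc 1
  set k₁ := max 1 M₁ with hk₁
  obtain ⟨U, hU⟩ := BDiagram.unif_cont (⇑ψ.symm) hψsc (k₁ + 1)
  have key : ∀ jt : ℕ, ∃ a b : S₂.B.PathSpace, a ≠ b ∧
      S₂.B.SameCoding S₂.T 1 a b ∧ ¬ S₂.B.SameCoding S₂.T U a b ∧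
      (∀ i, i < jt → S₂.B.IsMinEdge (a.1 i)) ∧
      (∀ i, i < jt → S₂.B.IsMinEdge (b.1 i)) := by
    intro jt
    obtain ⟨L, hL⟩ := BDiagram.unif_cont (⇑ψ) hψc jt
    obtain ⟨N, hN⟩ := BDiagram.minimal_stabilize S₁.B min₁ huniq₁ L
    obtain ⟨x, y, hdp, m, hcx, hcy⟩ := hWT k₁ (le_max_left 1 M₁)
      (max (k₁ + 1) N) (lt_of_lt_of_le (Nat.lt_succ_self k₁) (le_max_left _ _))
    set u := S₁.B.iterZ S₁.T m x with hu
    set v := S₁.B.iterZ S₁.T m y with hv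
    have huv : u ≠ v := fun h => hdp.1 ((S₁.B.iterZ S₁.T m).injective h)
    have hSCk₁ : S₁.B.SameCoding S₁.T k₁ u v :=
      (BDiagram.sameCoding_iterZ_iff S₁.T m k₁ x y).mpr hdp.2.1
    have hnotSC : ¬ S₁.B.SameCoding S₁.T (k₁ + 1) u v := fun h =>
      hdp.2.2 ((BDiagram.sameCoding_iterZ_iff S₁.T m (k₁ + 1) x y).mp h)
    have hua : ∀ i, i < L → u.1 i = min₁.1 i :=
      hN u (fun i hi => hcx i (lt_of_lt_of_le hi (le_max_right (k₁ + 1) N)))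
    have hva : ∀ i, i < L → v.1 i = min₁.1 i :=
      hN v (fun i hi => hcy i (lt_of_lt_of_le hi (le_max_right (k₁ + 1) N)))
    refine ⟨ψ u, ψ v, fun h => huv (ψ.injective h), ?_, ?_, ?_, ?_⟩
    · exact BDiagram.sameCoding_map ψ hψe hM₁
        (BDiagram.sameCoding_antitone (le_max_right 1 M₁) hSCk₁)
    · intro h
      apply hnotSC
      have h2 := BDiagram.sameCoding_map ψ.symm hψe' hU h
      rwa [Equiv.symm_apply_apply, Equiv.symm_apply_apply] at h2
    · intro i hi
      have h3 := hL u min₁ hua i hi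
      rw [h3, hψmin]
      exact hmin₂p i
    · intro i hi
      have h3 := hL v min₁ hva i hi
      rw [h3, hψmin]
      exact hmin₂p i
  choose a b hab hSc1 hnotU hcuta hcutb using key
  have hex : ∀ jt, ∃ k, ¬ S₂.B.SameCoding S₂.T k (a jt) (b jt) :=
    fun jt => BDiagram.exists_not_sameCoding S₂.T (hab jt)
  set d : ℕ → ℕ := fun jt => Nat.find (hex jt) - 1 with hd
  have hfind2 : ∀ jt, 1 < Nat.find (hex jt) := by
    intro jt
    rw [Nat.lt_find_iff]
    intro n hn hnot
    exact hnot (BDiagram.sameCoding_antitone hn (hSc1 jt))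
  have hScd : ∀ jt, S₂.B.SameCoding S₂.T (d jt) (a jt) (b jt) := by
    intro jt
    have h2 := Nat.find_min (hex jt)
      (show Nat.find (hex jt) - 1 < Nat.find (hex jt) by have := hfind2 jt; omega)
    exact not_not.mp h2
  have hdsucc : ∀ jt, d jt + 1 = Nat.find (hex jt) := by
    intro jt; have := hfind2 jt; simp only [hd]; omega
  have hDepth : ∀ jt, S₂.B.DepthPair S₂.T (d jt) (a jt) (b jt) := by
    intro jt
    refine ⟨hab jt, hScd jt, ?_⟩
    rw [hdsucc jt]
    exact Nat.find_spec (hex jt)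
  have hd_ge : ∀ jt, 1 ≤ d jt := by
    intro jt; have := hfind2 jt; simp only [hd]; omega
  have hd_lt : ∀ jt, d jt < U := by
    intro jt
    by_contra hge
    push_neg at hge
    exact hnotU jt (BDiagram.sameCoding_antitone hge (hScd jt))
  have pig : ∃ dstar : ℕ, ∀ J : ℕ, ∃ jt, J ≤ jt ∧ d jt = dstar := by
    by_contra hp
    push_neg at hp
    choose Jf hJf using hp
    exact hJf (d ((Finset.range U).sup Jf)) ((Finset.range U).sup Jf)
      (Finset.le_sup (Finset.mem_range.mpr (hd_lt _))) rfl
  obtain ⟨dstar, hdstar⟩ := pig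
  obtain ⟨jt0, -, hd0⟩ := hdstar 0
  obtain ⟨j₀, hj₀gt, hnone⟩ := hUT dstar (hd0 ▸ hd_ge jt0)
  obtain ⟨jt, hjt, hdjt⟩ := hdstar j₀
  refine hnone (a jt) (b jt) (hdjt ▸ hDepth jt) ⟨0, fun i hi => ?_, fun i hi => ?_⟩
  · rw [BDiagram.iterZ_zero_apply]; exact hcuta jt i (lt_of_lt_of_le hi hjt)
  · rw [BDiagram.iterZ_zero_apply]; exact hcutb jt i (lt_of_lt_of_le hi hjt)
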